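/- With m ≥ 2 and D, E, F ⊆ [m] with |D|, |E|, |F| ≤ m−1, write d = 2^|D|, e = 2^|E|, g = 2^|F|, M = 2^m, and |L| = (M−d)(M−e)(M−g). Then the Lee weight of every codeword c_a of C_L lies in the set { 0, |L|, |L| + (M−d)e(M−g), |L| + (M−d)(M−e)g/2, |L| + (M−d)(M−e)g/2 − (M−d)eg/2, |L| − (M−d)eg/2, |L| − (M−d)eg, |L| + d(M−e)(M−g), |L| − de(M−g), |L| − d(M−e)g/2, |L| − d(M−e)g/2 + deg/2, |L| + deg/2, |L| + deg }; in particular C_L is a few-Lee weight code with at most 12 distinct nonzero Lee weights. -/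

import Mathlib

open Finset

/-- The ring Z_2[u] with u² = 0: dual numbers over Z_2. -/
abbrev R2 : Type := DualNumber (ZMod 2)

/-- The support of a vector in Z_2^m, as a finset of coordinates. -/
def suppF {m : ℕ} (w : Fin m → ZMod 2) : Finset (Fin m) :=
  Finset.univ.filter fun i => w i ≠ 0

/-- Inner product ⟨x,y⟩ = Σ_i x_i y_i in Z_2. -/
def ip {m : ℕ} (x y : Fin m → ZMod 2) : ZMod 2 := ∑ i, x i * y i

/-- The defining set L = Δ_D^c × Δ_E^c × Δ_F^c, parametrized by triples (t₁,t₂,t₃). -/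
def Lset (m : ℕ) (D E F : Finset (Fin m)) :
    Finset ((Fin m → ZMod 2) × (Fin m → ZMod 2) × (Fin m → ZMod 2)) :=
  Finset.univ.filter fun t => ¬ suppF t.1 ⊆ D ∧ ¬ suppF t.2.1 ⊆ E ∧ ¬ suppF t.2.2 ⊆ F

/-- The codeword c_a = (a·l)_{l∈L} for a = (p, q+ur), where
a·l = ⟨q,t₂⟩ + u(⟨p,t₁⟩ + ⟨q,t₃⟩ + ⟨r,t₂⟩). -/
def cword {m : ℕ} (D E F : Finset (Fin m)) (p q r : Fin m → ZMod 2) :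
    ↥(Lset m D E F) → R2 := fun l =>
  TrivSqZeroExt.inl (ip q l.val.2.1) +
    TrivSqZeroExt.inr (ip p l.val.1 + ip q l.val.2.2 + ip r l.val.2.1)

/-- Lee weight of a single element q + ur of Z_2[u]: wt_H(r) + wt_H(q+r). -/
def leeWtOne (x : R2) : ℕ :=
  (if TrivSqZeroExt.snd x ≠ 0 then 1 else 0) +
    (if TrivSqZeroExt.fst x + TrivSqZeroExt.snd x ≠ 0 then 1 else 0)

/-- Lee weight of a vector over Z_2[u]: sum of coordinate Lee weights. -/
def leeWt {ι : Type} [Fintype ι] (c : ι → R2) : ℕ := ∑ i, leeWtOne (c i)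

/-- The Gray map: coordinatewise q + ur ↦ (r, q + r). -/
def gray {ι : Type} (c : ι → R2) : ι ⊕ ι → ZMod 2 :=
  Sum.elim (fun i => TrivSqZeroExt.snd (c i))
    (fun i => TrivSqZeroExt.fst (c i) + TrivSqZeroExt.snd (c i))

/-- The code C_L as a set of words over Z_2[u] indexed by L. -/
def CL (m : ℕ) (D E F : Finset (Fin m)) : Set (↥(Lset m D E F) → R2) :=
  { c | ∃ p q r : Fin m → ZMod 2, c = cword D E F p q r }

/-! ### Auxiliary machinery: the sign character on Z_2 and character sums. -/

/-- The sign character on `ZMod 2` with values in `ℚ`. -/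
def eps (b : ZMod 2) : ℚ := if b = 0 then 1 else -1

lemma eps_add (a b : ZMod 2) : eps (a + b) = eps a * eps b := by
  fin_cases a <;> fin_cases b <;>
    simp +decide [eps, show ((1 : ZMod 2) + 1) = 0 by decide]

lemma eps_zero : eps 0 = 1 := by simp [eps]

lemma eps_sum {ι : Type*} (s : Finset ι) (f : ι → ZMod 2) :
    eps (∑ i ∈ s, f i) = ∏ i ∈ s, eps (f i) := by
  induction s using Finset.cons_induction with
  | empty => simp [eps]
  | cons a s ha ih => rw [Finset.sum_cons, Finset.prod_cons, eps_add, ih]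

lemma zmod2_sum (f : ZMod 2 → ℚ) : ∑ x : ZMod 2, f x = f 0 + f 1 := by
  rw [show (Finset.univ : Finset (ZMod 2)) = {0, 1} by decide]
  simp [Finset.sum_pair (by decide : (0 : ZMod 2) ≠ 1)]

lemma eps_two_sum (b : ZMod 2) : ∑ x : ZMod 2, eps (b * x) = if b = 0 then 2 else 0 := by
  rw [zmod2_sum]
  fin_cases b
  · simp +decide [eps]; norm_num; rfl
  · simp +decide [eps]; norm_num; exact (by decide : ¬ (1 : ZMod 2) = 0)

lemma ip_add_left {m : ℕ} (x y z : Fin m → ZMod 2) :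
    ip (x + y) z = ip x z + ip y z := by
  simp [ip, add_mul, Finset.sum_add_distrib]

lemma ip_zero_left {m : ℕ} (z : Fin m → ZMod 2) : ip 0 z = 0 := by simp [ip]

set_option maxHeartbeats 1000000 in
/-- Character sum over Δ_S = {t : supp t ⊆ S}. -/
lemma char_sum {m : ℕ} (S : Finset (Fin m)) (v : Fin m → ZMod 2) :
    ∑ t ∈ Finset.univ.filter (fun t => suppF t ⊆ S), eps (ip v t)
      = if (∀ i ∈ S, v i = 0) then (2:ℚ) ^ S.card else 0 := by
  simp only [ip]
  have hfil : Finset.univ.filter (fun t : Fin m → ZMod 2 => suppF t ⊆ S)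
      = Fintype.piFinset (fun i => if i ∈ S then (Finset.univ : Finset (ZMod 2)) else {0}) := by
    ext t
    simp only [Finset.mem_filter, Finset.mem_univ, true_and, Fintype.mem_piFinset]
    constructor
    · intro h i
      by_cases hi : i ∈ S
      · simp [hi]
      · rw [if_neg hi, Finset.mem_singleton]
        by_contra ht
        exact hi (h (by simp [suppF, ht]))
    · intro h i hi
      simp only [suppF, Finset.mem_filter, Finset.mem_univ, true_and] at hi
      by_contra hiS
      have := h i
      rw [if_neg hiS, Finset.mem_singleton] at this
      exact hi this
  rw [hfil]
  have hsum : ∀ t ∈ Fintype.piFinset (fun i => if i ∈ S then (Finset.univ : Finset (ZMod 2)) else {0}),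
      eps (∑ i, v i * t i) = ∏ i, eps (v i * t i) := fun t _ => eps_sum _ _
  rw [Finset.sum_congr rfl hsum,
    show (∑ x ∈ Fintype.piFinset (fun i => if i ∈ S then (Finset.univ : Finset (ZMod 2)) else {0}),
        ∏ i, eps (v i * x i))
      = ∏ i, ∑ j ∈ (if i ∈ S then (Finset.univ : Finset (ZMod 2)) else {0}), eps (v i * j)
      from (Finset.prod_univ_sum (fun i => if i ∈ S then (Finset.univ : Finset (ZMod 2)) else {0})
        (fun i j => eps (v i * j))).symm]
  have hfac : ∀ i : Fin m, (∑ j ∈ (if i ∈ S then (Finset.univ : Finset (ZMod 2)) else {0}), eps (v i * j))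
      = if i ∈ S then (if v i = 0 then 2 else 0) else 1 := by
    intro i
    by_cases hi : i ∈ S
    · rw [if_pos hi, if_pos hi, ← eps_two_sum (v i)]
    · simp [hi, eps]
  rw [Finset.prod_congr rfl (fun i _ => hfac i),
    Finset.prod_ite_mem Finset.univ S, Finset.univ_inter]
  by_cases hall : ∀ i ∈ S, v i = 0
  · rw [if_pos hall, Finset.prod_congr rfl (fun i hi => by rw [if_pos (hall i hi)]),
      Finset.prod_const]
  · rw [if_neg hall]
    push_neg at hall
    obtain ⟨i, hi, hvi⟩ := hall
    exact Finset.prod_eq_zero hi (by rw [if_neg hvi])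

/-- Character sum over the complement Δ_S^c. -/
lemma cchar_sum {m : ℕ} (S : Finset (Fin m)) (v : Fin m → ZMod 2) :
    ∑ t ∈ Finset.univ.filter (fun t => ¬ suppF t ⊆ S), eps (ip v t)
      = (if v = 0 then (2:ℚ) ^ m else 0) - (if (∀ i ∈ S, v i = 0) then (2:ℚ) ^ S.card else 0) := by
  have h := Finset.sum_filter_add_sum_filter_not Finset.univ
    (fun t : Fin m → ZMod 2 => suppF t ⊆ S) (fun t => eps (ip v t))
  have huniv : ∑ t : Fin m → ZMod 2, eps (ip v t) = if v = 0 then (2:ℚ) ^ m else 0 := by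
    have := char_sum (Finset.univ : Finset (Fin m)) v
    rw [Finset.filter_true_of_mem (fun t _ => Finset.subset_univ _)] at this
    rw [this, Finset.card_univ, Fintype.card_fin]
    congr 1
    simp [funext_iff, eq_comm]
  rw [char_sum] at h
  linarith [h, huniv]

/-- Factorization of a character sum over Lset. -/
lemma lset_sum {m : ℕ} (D E F : Finset (Fin m)) (a b c : Fin m → ZMod 2) :
    ∑ l ∈ Lset m D E F, eps (ip a l.1 + ip b l.2.1 + ip c l.2.2)
      = (∑ t ∈ Finset.univ.filter (fun t => ¬ suppF t ⊆ D), eps (ip a t)) *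
        ((∑ t ∈ Finset.univ.filter (fun t => ¬ suppF t ⊆ E), eps (ip b t)) *
         (∑ t ∈ Finset.univ.filter (fun t => ¬ suppF t ⊆ F), eps (ip c t))) := by
  rw [Lset, Finset.sum_filter, Fintype.sum_prod_type]
  simp only [Fintype.sum_prod_type, Finset.sum_filter]
  rw [Finset.sum_mul_sum, Finset.sum_mul_sum]
  apply Finset.sum_congr rfl
  intro t1 _
  apply Finset.sum_congr rfl
  intro t2 _
  rw [Finset.mul_sum]
  apply Finset.sum_congr rfl
  intro t3 _
  rw [eps_add, eps_add]
  by_cases h1 : suppF t1 ⊆ D <;> by_cases h2 : suppF t2 ⊆ E <;> by_cases h3 : suppF t3 ⊆ F <;>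
    simp [h1, h2, h3] <;> ring

lemma leeWtOne_eps {m : ℕ} (D E F : Finset (Fin m)) (p q r : Fin m → ZMod 2)
    (l : ↥(Lset m D E F)) :
    ((leeWtOne (cword D E F p q r l) : ℚ))
      = 1 - (eps (ip p l.val.1 + ip r l.val.2.1 + ip q l.val.2.2)
           + eps (ip p l.val.1 + ip (q + r) l.val.2.1 + ip q l.val.2.2)) / 2 := by
  rw [cword, ip_add_left]
  simp only [leeWtOne, TrivSqZeroExt.snd_add, TrivSqZeroExt.snd_inl, TrivSqZeroExt.snd_inr,
    TrivSqZeroExt.fst_add, TrivSqZeroExt.fst_inl, TrivSqZeroExt.fst_inr, zero_add, add_zero]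
  generalize ip p l.val.1 = x
  generalize ip q l.val.2.1 = y
  generalize ip r l.val.2.1 = z
  generalize ip q l.val.2.2 = w
  fin_cases x <;> fin_cases y <;> fin_cases z <;> fin_cases w <;>
    norm_num +decide [eps, show ((1 : ZMod 2) + 1) = 0 by decide]

/-- The key identity: the Lee weight of a codeword as a character-sum expression. -/
lemma main_identity {m : ℕ} (D E F : Finset (Fin m)) (p q r : Fin m → ZMod 2) :
    ((leeWt (cword D E F p q r) : ℚ))
      = ((Lset m D E F).card : ℚ)
        - ((∑ t ∈ Finset.univ.filter (fun t => ¬ suppF t ⊆ D), eps (ip p t))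
            * ((∑ t ∈ Finset.univ.filter (fun t => ¬ suppF t ⊆ F), eps (ip q t)))
            * ((∑ t ∈ Finset.univ.filter (fun t => ¬ suppF t ⊆ E), eps (ip r t))
             + (∑ t ∈ Finset.univ.filter (fun t => ¬ suppF t ⊆ E), eps (ip (q + r) t)))) / 2 := by
  have step1 : ((leeWt (cword D E F p q r) : ℚ))
      = ∑ l : ↥(Lset m D E F), ((leeWtOne (cword D E F p q r l) : ℚ)) := by
    rw [leeWt]; push_cast; rfl
  rw [step1, Finset.sum_congr rfl (fun l _ => leeWtOne_eps D E F p q r l)]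
  rw [show (∑ l : ↥(Lset m D E F),
      (1 - (eps (ip p l.val.1 + ip r l.val.2.1 + ip q l.val.2.2)
           + eps (ip p l.val.1 + ip (q + r) l.val.2.1 + ip q l.val.2.2)) / 2))
    = ∑ l ∈ Lset m D E F,
      (1 - (eps (ip p l.1 + ip r l.2.1 + ip q l.2.2)
           + eps (ip p l.1 + ip (q + r) l.2.1 + ip q l.2.2)) / 2)
    from Finset.sum_coe_sort (Lset m D E F) (fun l =>
      (1 - (eps (ip p l.1 + ip r l.2.1 + ip q l.2.2)
           + eps (ip p l.1 + ip (q + r) l.2.1 + ip q l.2.2)) / 2))]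
  rw [Finset.sum_sub_distrib, Finset.sum_const, ← Finset.sum_div, Finset.sum_add_distrib]
  rw [lset_sum D E F p r q, lset_sum D E F p (q + r) q]
  push_cast
  ring

/-- Case analysis: the possible weight values all lie in the 13-element set. -/
lemma mem_cases (d e g M Lc X Z Y₁ Y₂ : ℚ) (hL : Lc = (M - d) * (M - e) * (M - g))
    (hX : X = M - d ∨ X = -d ∨ X = 0)
    (hcase : (Z = M - g ∧ Y₂ = Y₁ ∧ (Y₁ = M - e ∨ Y₁ = -e ∨ Y₁ = 0)) ∨
      ((Z = -g ∨ Z = 0) ∧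
        ((Y₁ = M - e ∧ (Y₂ = -e ∨ Y₂ = 0)) ∨ ((Y₁ = -e ∨ Y₁ = 0) ∧ Y₂ = M - e) ∨
          ((Y₁ = -e ∨ Y₁ = 0) ∧ (Y₂ = -e ∨ Y₂ = 0))))) :
    Lc - X * Z * (Y₁ + Y₂) / 2 ∈
        ({0, Lc,
          Lc + (M - d) * e * (M - g),
          Lc + (M - d) * (M - e) * g / 2,
          Lc + (M - d) * (M - e) * g / 2 - (M - d) * e * g / 2,
          Lc - (M - d) * e * g / 2,
          Lc - (M - d) * e * g,
          Lc + d * (M - e) * (M - g),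
          Lc - d * e * (M - g),
          Lc - d * (M - e) * g / 2,
          Lc - d * (M - e) * g / 2 + d * e * g / 2,
          Lc + d * e * g / 2,
          Lc + d * e * g} : Set ℚ) := by
  subst hL
  rcases hcase with ⟨hZ, hY, (h1 | h1 | h1)⟩ |
      ⟨(hZ | hZ), (⟨h1, (h2 | h2)⟩ | ⟨(h1 | h1), h2⟩ | ⟨(h1 | h1), (h2 | h2)⟩)⟩ <;>
    rcases hX with hx | hx | hx <;>
    subst_vars <;>
    simp only [Set.mem_insert_iff, Set.mem_singleton_iff] <;>
    first
    | (left; ring1)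
    | (right; left; ring1)
    | (right; right; left; ring1)
    | (right; right; right; left; ring1)
    | (right; right; right; right; left; ring1)
    | (right; right; right; right; right; left; ring1)
    | (right; right; right; right; right; right; left; ring1)
    | (right; right; right; right; right; right; right; left; ring1)
    | (right; right; right; right; right; right; right; right; left; ring1)
    | (right; right; right; right; right; right; right; right; right; left; ring1)
    | (right; right; right; right; right; right; right; right; right; right; left; ring1)
    | (right; right; right; right; right; right; right; right; right; right; right; left; ring1)
    | (right; right; right; right; right; right; right; right; right; right; right; right; ring1)

/-- every codeword of C_L has Lee weight in the listed 13-element set,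
where d = 2^|D|, e = 2^|E|, g = 2^|F|, M = 2^m and Lc = |L| = (M−d)(M−e)(M−g). -/
theorem stmt11 (m : ℕ) (hm : 2 ≤ m) (D E F : Finset (Fin m))
    (hD : D.card ≤ m - 1) (hE : E.card ≤ m - 1) (hF : F.card ≤ m - 1)
    (d e g M Lc : ℚ)
    (hd : d = 2 ^ D.card) (he : e = 2 ^ E.card) (hg : g = 2 ^ F.card)
    (hM : M = 2 ^ m) (hL : Lc = (M - d) * (M - e) * (M - g)) :
    ∀ p q r : Fin m → ZMod 2,
      (leeWt (cword D E F p q r) : ℚ) ∈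
        ({0, Lc,
          Lc + (M - d) * e * (M - g),
          Lc + (M - d) * (M - e) * g / 2,
          Lc + (M - d) * (M - e) * g / 2 - (M - d) * e * g / 2,
          Lc - (M - d) * e * g / 2,
          Lc - (M - d) * e * g,
          Lc + d * (M - e) * (M - g),
          Lc - d * e * (M - g),
          Lc - d * (M - e) * g / 2,
          Lc - d * (M - e) * g / 2 + d * e * g / 2,
          Lc + d * e * g / 2,
          Lc + d * e * g} : Set ℚ) := by
  intro p q r
  set X := ∑ t ∈ Finset.univ.filter (fun t => ¬ suppF t ⊆ D), eps (ip p t) with hXdef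
  set Z := ∑ t ∈ Finset.univ.filter (fun t => ¬ suppF t ⊆ F), eps (ip q t) with hZdef
  set Y₁ := ∑ t ∈ Finset.univ.filter (fun t => ¬ suppF t ⊆ E), eps (ip r t) with hY1def
  set Y₂ := ∑ t ∈ Finset.univ.filter (fun t => ¬ suppF t ⊆ E), eps (ip (q + r) t) with hY2def
  have hfc : ∀ (S : Finset (Fin m)),
      (((Finset.univ.filter (fun t : Fin m → ZMod 2 => ¬ suppF t ⊆ S)).card : ℚ))
        = 2 ^ m - 2 ^ S.card := by
    intro S
    have h := cchar_sum S (0 : Fin m → ZMod 2)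
    simp only [ip_zero_left, eps_zero, Finset.sum_const, nsmul_eq_mul, mul_one] at h
    rw [h]; simp
  have hcard : ((Lset m D E F).card : ℚ) = Lc := by
    have h0 := lset_sum D E F 0 0 0
    simp only [ip_zero_left, add_zero, eps_zero, Finset.sum_const, nsmul_eq_mul, mul_one] at h0
    rw [hfc, hfc, hfc] at h0
    rw [h0, hL, hM, hd, he, hg]
    ring
  have hval : (leeWt (cword D E F p q r) : ℚ) = Lc - X * Z * (Y₁ + Y₂) / 2 := by
    rw [main_identity D E F p q r, hcard]
  rw [hval]
  -- facts about X
  have hXfact : X = M - d ∨ X = -d ∨ X = 0 := by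
    rw [hXdef, cchar_sum]
    by_cases hp : p = 0
    · left
      rw [if_pos hp, if_pos (fun i _ => by rw [hp]; rfl), hM, hd]
    · by_cases hpD : ∀ i ∈ D, p i = 0
      · right; left; rw [if_neg hp, if_pos hpD, hd]; ring
      · right; right; rw [if_neg hp, if_neg hpD]; ring
  have hYgen : ∀ v : Fin m → ZMod 2, v ≠ 0 →
      ((∑ t ∈ Finset.univ.filter (fun t => ¬ suppF t ⊆ E), eps (ip v t)) = -e ∨
       (∑ t ∈ Finset.univ.filter (fun t => ¬ suppF t ⊆ E), eps (ip v t)) = 0) := by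
    intro v hv
    rw [cchar_sum]
    by_cases hvE : ∀ i ∈ E, v i = 0
    · left; rw [if_neg hv, if_pos hvE, he]; ring
    · right; rw [if_neg hv, if_neg hvE]; ring
  have hYzero : ∀ v : Fin m → ZMod 2, v = 0 →
      (∑ t ∈ Finset.univ.filter (fun t => ¬ suppF t ⊆ E), eps (ip v t)) = M - e := by
    intro v hv
    rw [cchar_sum, if_pos hv, if_pos (fun i _ => by rw [hv]; rfl), hM, he]
  have hcase : (Z = M - g ∧ Y₂ = Y₁ ∧ (Y₁ = M - e ∨ Y₁ = -e ∨ Y₁ = 0)) ∨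
      ((Z = -g ∨ Z = 0) ∧
        ((Y₁ = M - e ∧ (Y₂ = -e ∨ Y₂ = 0)) ∨ ((Y₁ = -e ∨ Y₁ = 0) ∧ Y₂ = M - e) ∨
          ((Y₁ = -e ∨ Y₁ = 0) ∧ (Y₂ = -e ∨ Y₂ = 0)))) := by
    by_cases hq : q = 0
    · left
      refine ⟨?_, ?_, ?_⟩
      · rw [hZdef, cchar_sum, if_pos hq, if_pos (fun i _ => by rw [hq]; rfl), hM, hg]
      · rw [hY2def, hY1def, hq, zero_add]
      · by_cases hr : r = 0
        · exact Or.inl (hYzero r hr)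
        · exact Or.inr (hYgen r hr)
    · right
      constructor
      · rw [hZdef, cchar_sum]
        by_cases hqF : ∀ i ∈ F, q i = 0
        · left; rw [if_neg hq, if_pos hqF, hg]; ring
        · right; rw [if_neg hq, if_neg hqF]; ring
      · by_cases hr : r = 0
        · refine Or.inl ⟨hYzero r hr, hYgen (q + r) ?_⟩
          rw [hr, add_zero]; exact hq
        · by_cases hs : q + r = 0
          · exact Or.inr (Or.inl ⟨hYgen r hr, hYzero (q + r) hs⟩)
          · exact Or.inr (Or.inr ⟨hYgen r hr, hYgen (q + r) hs⟩)
  exact mem_cases d e g M Lc X Z Y₁ Y₂ hL hXfact hcase
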